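/- For every even integer L ≥ 2 and every real α > 0, the sum of α-th powers of the absolute values of all principal Pfaffian minors of the 2L×2L open-boundary critical XX-chain matrix equals the sum of α-th powers of the absolute values of all minors of the L×L open-boundary critical transverse-field Ising correlation matrix: Pf_α(R^OBC(2L)) = Det_α(G^OBC(L)). -/

import Mathlib

open scoped BigOperators Matrix

/-- The square submatrix of `A` with rows indexed by `I` and columns indexed by `J`
(both in increasing order), as a determinant; it is `0` if `I.card ≠ J.card`. -/
noncomputable def subdetR {N : ℕ} (A : Matrix (Fin N) (Fin N) ℝ) (I J : Finset (Fin N)) : ℝ :=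
  if h : J.card = I.card then
    Matrix.det (Matrix.of fun a b : Fin I.card =>
      A (I.orderEmbOfFin rfl a) (J.orderEmbOfFin h b))
  else 0

/-- `Det_β(A) = Σ_{k=0}^{N} Σ_{|I|=|J|=k} |det A[I,J]|^β`. -/
noncomputable def DetPowR {N : ℕ} (A : Matrix (Fin N) (Fin N) ℝ) (β : ℝ) : ℝ :=
  ∑ k ∈ Finset.range (N + 1),
    ∑ I ∈ Finset.univ.filter (fun I : Finset (Fin N) => I.card = k),
      ∑ J ∈ Finset.univ.filter (fun J : Finset (Fin N) => J.card = k),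
        |subdetR A I J| ^ β

/-- `Pf_β(R) = Σ_{S, |S| even} |det R[S,S]|^{β/2}`, the sum of β-th powers of the
absolute values of all principal Pfaffian minors of a skew-symmetric matrix. -/
noncomputable def PfPowR {N : ℕ} (R : Matrix (Fin N) (Fin N) ℝ) (β : ℝ) : ℝ :=
  ∑ S ∈ Finset.univ.filter (fun S : Finset (Fin N) => Even S.card),
    |subdetR R S S| ^ (β / 2)

/-- The open-boundary critical transverse-field Ising correlation matrix
`G^OBC_{jk} = ((-1)^{j-k}/(2L+1))[csc(π(j-k+1/2)/(2L+1)) + csc(π(j+k-1/2)/(2L+1))]`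
(`j`, `k` one-based). -/
noncomputable def Gobc (L : ℕ) : Matrix (Fin L) (Fin L) ℝ :=
  Matrix.of fun j k =>
    let J : ℝ := (j : ℕ) + 1
    let K : ℝ := (k : ℕ) + 1
    (-1 : ℝ) ^ ((j : ℤ) - (k : ℤ)) / (2 * L + 1) *
      ((Real.sin (Real.pi * (J - K + 1 / 2) / (2 * L + 1)))⁻¹ +
       (Real.sin (Real.pi * (J + K - 1 / 2) / (2 * L + 1)))⁻¹)

/-- The open-boundary critical XX-chain matrix: with `θ = π/(N+1)` and one-based
indices `j`, `k`: `R_{jk} = (1/(N+1))[csc((k-j)θ/2) + csc((k+j)θ/2)]` for `j` odd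
and `k` even, `R_{jk} = -R_{kj}` for `j` even and `k` odd, and `R_{jk} = 0` if
`j+k` is even. -/
noncomputable def Robc (N : ℕ) : Matrix (Fin N) (Fin N) ℝ :=
  Matrix.of fun j k =>
    let J : ℕ := (j : ℕ) + 1
    let K : ℕ := (k : ℕ) + 1
    let θ : ℝ := Real.pi / (N + 1)
    if J % 2 = 1 ∧ K % 2 = 0 then
      1 / (N + 1) *
        ((Real.sin (((K : ℝ) - (J : ℝ)) * θ / 2))⁻¹ +
         (Real.sin (((K : ℝ) + (J : ℝ)) * θ / 2))⁻¹)
    else if J % 2 = 0 ∧ K % 2 = 1 then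
      -(1 / (N + 1) *
        ((Real.sin (((J : ℝ) - (K : ℝ)) * θ / 2))⁻¹ +
         (Real.sin (((J : ℝ) + (K : ℝ)) * θ / 2))⁻¹))
    else 0

namespace PfAux

def oE (L : ℕ) : Fin L ↪ Fin (2 * L) :=
  ⟨fun a => ⟨2 * a.val, by have := a.isLt; omega⟩, fun a b h => by
    have h2 : (2*a.val : ℕ) = 2*b.val := congrArg Fin.val h
    exact Fin.ext (by omega)⟩

def eE (L : ℕ) : Fin L ↪ Fin (2 * L) :=
  ⟨fun a => ⟨2 * a.val + 1, by have := a.isLt; omega⟩, fun a b h => by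
    have h2 : (2*a.val+1 : ℕ) = 2*b.val+1 := congrArg Fin.val h
    exact Fin.ext (by omega)⟩

@[simp] lemma oE_val {L : ℕ} (a : Fin L) : ((oE L a : Fin (2*L)) : ℕ) = 2 * a.val := rfl
@[simp] lemma eE_val {L : ℕ} (a : Fin L) : ((eE L a : Fin (2*L)) : ℕ) = 2 * a.val + 1 := rfl

lemma robc_zero {N : ℕ} (j k : Fin N) (h : (j : ℕ) % 2 = (k : ℕ) % 2) :
    Robc N j k = 0 := by
  simp only [Robc, Matrix.of_apply]
  rw [if_neg (by omega), if_neg (by omega)]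

lemma neg_one_sq_pow (n : ℕ) : (-1:ℝ)^n * (-1:ℝ)^n = 1 := by
  rw [← pow_add]; exact Even.neg_one_pow ⟨n, rfl⟩

lemma robc_oe_ee {L : ℕ} (x y : Fin L) :
    Robc (2*L) (oE L x) (eE L y) = (-1:ℝ)^(x:ℕ) * (-1:ℝ)^(y:ℕ) * Gobc L y x := by
  simp only [Robc, Gobc, Matrix.of_apply]
  rw [if_pos (by simp only [oE_val, eE_val]; omega :
    (((oE L x : Fin (2*L)) : ℕ) + 1) % 2 = 1 ∧ (((eE L y : Fin (2*L)) : ℕ) + 1) % 2 = 0)]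
  simp only [oE_val, eE_val]
  have h1 : ((2 * y.val + 1 + 1 : ℕ) - (2 * x.val + 1 : ℕ) : ℝ) * (Real.pi / ((2 * L : ℕ) + 1)) / 2
      = Real.pi * ((y.val : ℝ) + 1 - ((x.val : ℝ) + 1) + 1 / 2) / (2 * (L:ℝ) + 1) := by
    push_cast; ring
  have h2 : ((2 * y.val + 1 + 1 : ℕ) + (2 * x.val + 1 : ℕ) : ℝ) * (Real.pi / ((2 * L : ℕ) + 1)) / 2
      = Real.pi * ((y.val : ℝ) + 1 + ((x.val : ℝ) + 1) - 1 / 2) / (2 * (L:ℝ) + 1) := by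
    push_cast; ring
  rw [h1, h2]
  have hz : (-1:ℝ) ^ ((y:ℤ) - (x:ℤ)) = (-1:ℝ) ^ (y:ℕ) * (-1:ℝ) ^ (x:ℕ) := by
    rw [zpow_sub₀ (by norm_num : (-1:ℝ) ≠ 0), zpow_natCast, zpow_natCast]
    rcases Nat.even_or_odd (x:ℕ) with h | h
    · rw [h.neg_one_pow]; ring
    · rw [h.neg_one_pow]; ring
  rw [hz]
  have hx := neg_one_sq_pow (x:ℕ)
  have hy := neg_one_sq_pow (y:ℕ)
  have hc : ((2 * L : ℕ) : ℝ) + 1 = 2 * (L:ℝ) + 1 := by push_cast; ring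
  rw [hc]
  generalize (-1:ℝ)^(x:ℕ) = a at hx ⊢
  generalize (-1:ℝ)^(y:ℕ) = b at hy ⊢
  set T1 := (Real.sin (Real.pi * ((y.val:ℝ) + 1 - ((x.val:ℝ) + 1) + 1 / 2) / (2 * (L:ℝ) + 1)))⁻¹
  set T2 := (Real.sin (Real.pi * ((y.val:ℝ) + 1 + ((x.val:ℝ) + 1) - 1 / 2) / (2 * (L:ℝ) + 1)))⁻¹
  linear_combination -((T1 + T2) / (2 * (L:ℝ) + 1) * b * b * hx + (T1 + T2) / (2 * (L:ℝ) + 1) * hy)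

lemma robc_ee_oe {L : ℕ} (x y : Fin L) :
    Robc (2*L) (eE L y) (oE L x) = - Robc (2*L) (oE L x) (eE L y) := by
  simp only [Robc, Matrix.of_apply]
  rw [if_neg (by simp only [oE_val, eE_val]; omega :
      ¬((((eE L y : Fin (2*L)) : ℕ) + 1) % 2 = 1 ∧ (((oE L x : Fin (2*L)) : ℕ) + 1) % 2 = 0)),
    if_pos (by simp only [oE_val, eE_val]; omega :
      (((eE L y : Fin (2*L)) : ℕ) + 1) % 2 = 0 ∧ (((oE L x : Fin (2*L)) : ℕ) + 1) % 2 = 1),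
    if_pos (by simp only [oE_val, eE_val]; omega :
      (((oE L x : Fin (2*L)) : ℕ) + 1) % 2 = 1 ∧ (((eE L y : Fin (2*L)) : ℕ) + 1) % 2 = 0)]

def pairSet (L : ℕ) (A B : Finset (Fin L)) : Finset (Fin (2*L)) :=
  A.map (oE L) ∪ B.map (eE L)

lemma disj_maps {L : ℕ} (A B : Finset (Fin L)) : Disjoint (A.map (oE L)) (B.map (eE L)) := by
  rw [Finset.disjoint_left]
  rintro x hx hy
  rw [Finset.mem_map] at hx hy
  obtain ⟨a, _, ha⟩ := hx
  obtain ⟨b, _, hb⟩ := hy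
  have h1 : ((oE L a : Fin (2*L)) : ℕ) = (x : ℕ) := congrArg Fin.val ha
  have h2 : ((eE L b : Fin (2*L)) : ℕ) = (x : ℕ) := congrArg Fin.val hb
  simp only [oE_val, eE_val] at h1 h2
  omega

lemma card_pairSet {L : ℕ} (A B : Finset (Fin L)) :
    (pairSet L A B).card = A.card + B.card := by
  rw [pairSet, Finset.card_union_of_disjoint (disj_maps A B), Finset.card_map, Finset.card_map]

def preO {L : ℕ} (S : Finset (Fin (2*L))) : Finset (Fin L) :=
  Finset.univ.filter (fun a => oE L a ∈ S)

def preE {L : ℕ} (S : Finset (Fin (2*L))) : Finset (Fin L) :=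
  Finset.univ.filter (fun a => eE L a ∈ S)

lemma preO_pairSet {L : ℕ} (A B : Finset (Fin L)) : preO (pairSet L A B) = A := by
  ext a
  simp only [preO, pairSet, Finset.mem_filter, Finset.mem_univ, true_and, Finset.mem_union,
    Finset.mem_map']
  constructor
  · rintro (h | h)
    · exact h
    · rw [Finset.mem_map] at h
      obtain ⟨b, _, hb⟩ := h
      have := congrArg Fin.val hb
      simp only [oE_val, eE_val] at this
      omega
  · exact fun h => Or.inl h

lemma preE_pairSet {L : ℕ} (A B : Finset (Fin L)) : preE (pairSet L A B) = B := by
  ext a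
  simp only [preE, pairSet, Finset.mem_filter, Finset.mem_univ, true_and, Finset.mem_union,
    Finset.mem_map']
  constructor
  · rintro (h | h)
    · rw [Finset.mem_map] at h
      obtain ⟨b, _, hb⟩ := h
      have := congrArg Fin.val hb
      simp only [oE_val, eE_val] at this
      omega
    · exact h
  · exact fun h => Or.inr h

lemma pairSet_pre {L : ℕ} (S : Finset (Fin (2*L))) : pairSet L (preO S) (preE S) = S := by
  ext x
  simp only [pairSet, preO, preE, Finset.mem_union, Finset.mem_map, Finset.mem_filter,
    Finset.mem_univ, true_and]
  constructor
  · rintro (⟨a, ha, rfl⟩ | ⟨a, ha, rfl⟩) <;> exact ha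
  · intro hx
    rcases Nat.even_or_odd (x : ℕ) with ⟨m, hm⟩ | ⟨m, hm⟩
    · left
      refine ⟨⟨m, by have := x.isLt; omega⟩, ?_, ?_⟩ <;>
        · have hox : oE L ⟨m, by have := x.isLt; omega⟩ = x := Fin.ext (by simp; omega)
          rw [hox]; try exact hx
    · right
      refine ⟨⟨m, by have := x.isLt; omega⟩, ?_, ?_⟩ <;>
        · have hox : eE L ⟨m, by have := x.isLt; omega⟩ = x := Fin.ext (by simp; omega)
          rw [hox]; try exact hx
lemma parity_image {L : ℕ} (A B : Finset (Fin L)) :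
    (Finset.univ.filter (fun i : Fin (pairSet L A B).card =>
        (((pairSet L A B).orderEmbOfFin rfl i : Fin (2*L)) : ℕ) % 2 = 0)).image
      (fun i => (pairSet L A B).orderEmbOfFin rfl i) = A.map (oE L) := by
  set S := pairSet L A B with hS
  ext x
  simp only [Finset.mem_image, Finset.mem_filter, Finset.mem_univ, true_and]
  constructor
  · rintro ⟨i, hpar, rfl⟩
    have hmem : S.orderEmbOfFin rfl i ∈ A.map (oE L) ∪ B.map (eE L) :=
      Finset.orderEmbOfFin_mem S rfl i
    rw [Finset.mem_union] at hmem
    rcases hmem with h | h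
    · exact h
    · exfalso
      rw [Finset.mem_map] at h
      obtain ⟨b, _, hb⟩ := h
      have := congrArg Fin.val hb
      simp only [eE_val] at this
      omega
  · intro hx
    have hxS : x ∈ S := Finset.mem_union_left _ hx
    have hr : x ∈ Set.range (S.orderEmbOfFin rfl) := by
      rw [Finset.range_orderEmbOfFin]; exact hxS
    obtain ⟨i, rfl⟩ := hr
    refine ⟨i, ?_, rfl⟩
    rw [Finset.mem_map] at hx
    obtain ⟨a, _, ha⟩ := hx
    have := congrArg Fin.val ha
    simp only [oE_val] at this
    omega

lemma parity_image' {L : ℕ} (A B : Finset (Fin L)) :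
    (Finset.univ.filter (fun i : Fin (pairSet L A B).card =>
        (((pairSet L A B).orderEmbOfFin rfl i : Fin (2*L)) : ℕ) % 2 = 1)).image
      (fun i => (pairSet L A B).orderEmbOfFin rfl i) = B.map (eE L) := by
  set S := pairSet L A B with hS
  ext x
  simp only [Finset.mem_image, Finset.mem_filter, Finset.mem_univ, true_and]
  constructor
  · rintro ⟨i, hpar, rfl⟩
    have hmem : S.orderEmbOfFin rfl i ∈ A.map (oE L) ∪ B.map (eE L) :=
      Finset.orderEmbOfFin_mem S rfl i
    rw [Finset.mem_union] at hmem
    rcases hmem with h | h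
    · exfalso
      rw [Finset.mem_map] at h
      obtain ⟨b, _, hb⟩ := h
      have := congrArg Fin.val hb
      simp only [oE_val] at this
      omega
    · exact h
  · intro hx
    have hxS : x ∈ S := Finset.mem_union_right _ hx
    have hr : x ∈ Set.range (S.orderEmbOfFin rfl) := by
      rw [Finset.range_orderEmbOfFin]; exact hxS
    obtain ⟨i, rfl⟩ := hr
    refine ⟨i, ?_, rfl⟩
    rw [Finset.mem_map] at hx
    obtain ⟨a, _, ha⟩ := hx
    have := congrArg Fin.val ha
    simp only [eE_val] at this
    omega

lemma subdet_pair_ne {L : ℕ} (A B : Finset (Fin L)) (hAB : A.card ≠ B.card) :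
    subdetR (Robc (2*L)) (pairSet L A B) (pairSet L A B) = 0 := by
  set S := pairSet L A B with hS
  rw [subdetR, dif_pos rfl, Matrix.det_apply]
  apply Finset.sum_eq_zero
  intro σ _
  have key : ∃ i, (Matrix.of fun a b : Fin S.card =>
      Robc (2*L) (S.orderEmbOfFin rfl a) (S.orderEmbOfFin rfl b)) (σ i) i = 0 := by
    by_contra hno
    push_neg at hno
    set T := Finset.univ.filter (fun i : Fin S.card =>
      ((S.orderEmbOfFin rfl i : Fin (2*L)) : ℕ) % 2 = 0) with hT
    set T' := Finset.univ.filter (fun i : Fin S.card =>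
      ((S.orderEmbOfFin rfl i : Fin (2*L)) : ℕ) % 2 = 1) with hT'
    have hmaps : ∀ i ∈ T, σ i ∈ T' := by
      intro i hi
      rw [hT, Finset.mem_filter] at hi
      rw [hT', Finset.mem_filter]
      refine ⟨Finset.mem_univ _, ?_⟩
      by_contra hodd
      exact hno i (robc_zero _ _ (by omega))
    have hmaps' : ∀ i ∈ T', σ i ∈ T := by
      intro i hi
      rw [hT', Finset.mem_filter] at hi
      rw [hT, Finset.mem_filter]
      refine ⟨Finset.mem_univ _, ?_⟩
      by_contra heven
      exact hno i (robc_zero _ _ (by omega))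
    have h1 : T.card ≤ T'.card :=
      Finset.card_le_card_of_injOn σ hmaps (σ.injective.injOn)
    have h2 : T'.card ≤ T.card :=
      Finset.card_le_card_of_injOn σ hmaps' (σ.injective.injOn)
    have hTA : T.card = A.card := by
      calc T.card = (T.image (fun i => S.orderEmbOfFin rfl i)).card :=
            (Finset.card_image_of_injective T (S.orderEmbOfFin rfl).injective).symm
        _ = (A.map (oE L)).card := by rw [hT]; exact congrArg Finset.card (parity_image A B)
        _ = A.card := Finset.card_map _
    have hTB : T'.card = B.card := by
      calc T'.card = (T'.image (fun i => S.orderEmbOfFin rfl i)).card :=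
            (Finset.card_image_of_injective T' (S.orderEmbOfFin rfl).injective).symm
        _ = (B.map (eE L)).card := by rw [hT']; exact congrArg Finset.card (parity_image' A B)
        _ = B.card := Finset.card_map _
    omega
  obtain ⟨i, hi⟩ := key
  have hz : (∏ j, (Matrix.of fun a b : Fin S.card =>
      Robc (2*L) (S.orderEmbOfFin rfl a) (S.orderEmbOfFin rfl b)) (σ j) j) = 0 :=
    Finset.prod_eq_zero (Finset.mem_univ i) hi
  rw [hz, smul_zero]
lemma abs_subdet_pair {L : ℕ} (A B : Finset (Fin L)) (hAB : A.card = B.card) :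
    |subdetR (Robc (2*L)) (pairSet L A B) (pairSet L A B)|
      = |subdetR (Gobc L) B A| ^ (2:ℕ) := by
  set S := pairSet L A B with hS
  rw [subdetR, dif_pos rfl, subdetR, dif_pos hAB]
  set W : Matrix (Fin B.card) (Fin B.card) ℝ :=
    Matrix.of (fun a b => Gobc L (B.orderEmbOfFin rfl a) (A.orderEmbOfFin hAB b)) with hW
  set M : Matrix (Fin S.card) (Fin S.card) ℝ :=
    Matrix.of (fun a b => Robc (2*L) (S.orderEmbOfFin rfl a) (S.orderEmbOfFin rfl b)) with hM
  have hcard : S.card = B.card + B.card := by rw [hS, card_pairSet, hAB]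
  have hmemA : ∀ a : Fin B.card, (oE L (A.orderEmbOfFin hAB a) : Fin (2*L)) ∈ S :=
    fun a => Finset.mem_union_left _ (Finset.mem_map_of_mem _ (Finset.orderEmbOfFin_mem A hAB a))
  have hmemB : ∀ b : Fin B.card, (eE L (B.orderEmbOfFin rfl b) : Fin (2*L)) ∈ S :=
    fun b => Finset.mem_union_right _ (Finset.mem_map_of_mem _ (Finset.orderEmbOfFin_mem B rfl b))
  set φ : Fin B.card ⊕ Fin B.card → {x // x ∈ S} :=
    Sum.elim (fun a => ⟨oE L (A.orderEmbOfFin hAB a), hmemA a⟩)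
             (fun b => ⟨eE L (B.orderEmbOfFin rfl b), hmemB b⟩) with hφ
  have hinj : Function.Injective φ := by
    rintro (a | a) (b | b) h <;>
      simp only [hφ, Sum.elim_inl, Sum.elim_inr, Subtype.mk.injEq] at h
    · exact congrArg Sum.inl ((A.orderEmbOfFin hAB).injective ((oE L).injective h))
    · exact absurd (congrArg Fin.val h) (by simp only [oE_val, eE_val]; omega)
    · exact absurd (congrArg Fin.val h) (by simp only [oE_val, eE_val]; omega)
    · exact congrArg Sum.inr ((B.orderEmbOfFin rfl).injective ((eE L).injective h))
  have hbij : Function.Bijective φ :=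
    (Fintype.bijective_iff_injective_and_card φ).mpr ⟨hinj, by
      simp only [Fintype.card_sum, Fintype.card_coe, Fintype.card_fin, hcard]⟩
  set e : Fin B.card ⊕ Fin B.card ≃ Fin S.card :=
    (Equiv.ofBijective φ hbij).trans (S.orderIsoOfFin rfl).toEquiv.symm with he
  have hE : ∀ z, S.orderEmbOfFin rfl (e z) = (φ z : Fin (2*L)) := by
    intro z
    rw [← Finset.coe_orderIsoOfFin_apply]
    have h1 : (S.orderIsoOfFin rfl) (e z) = φ z :=
      (S.orderIsoOfFin rfl).apply_symm_apply (Equiv.ofBijective φ hbij z)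
    rw [h1]
  set P : Matrix (Fin B.card) (Fin B.card) ℝ :=
    Matrix.of (fun a b => Robc (2*L) (oE L (A.orderEmbOfFin hAB a)) (eE L (B.orderEmbOfFin rfl b)))
    with hP
  set Q : Matrix (Fin B.card) (Fin B.card) ℝ :=
    Matrix.of (fun b a => Robc (2*L) (eE L (B.orderEmbOfFin rfl b)) (oE L (A.orderEmbOfFin hAB a)))
    with hQ
  have hblock : M.submatrix e e = Matrix.fromBlocks 0 P Q 0 := by
    ext z w
    rcases z with a | a <;> rcases w with b | b <;>
      simp only [Matrix.submatrix_apply, hM, Matrix.of_apply, hE, hφ, Sum.elim_inl, Sum.elim_inr,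
        Matrix.fromBlocks_apply₁₁, Matrix.fromBlocks_apply₁₂, Matrix.fromBlocks_apply₂₁,
        Matrix.fromBlocks_apply₂₂, Matrix.zero_apply, hP, hQ]
    · exact robc_zero _ _ (by simp only [oE_val]; omega)
    · exact robc_zero _ _ (by simp only [eE_val]; omega)
  have hdet1 : M.det = (Matrix.fromBlocks 0 P Q 0).det := by
    rw [← hblock, Matrix.det_submatrix_equiv_self]
  have hswap : (Matrix.fromBlocks (0 : Matrix (Fin B.card) (Fin B.card) ℝ) P Q 0).submatrix
      (Equiv.sumComm (Fin B.card) (Fin B.card)) id = Matrix.fromBlocks Q 0 0 P := by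
    ext z w; rcases z with a | a <;> rcases w with b | b <;> rfl
  have hperm := Matrix.det_permute
    ((Equiv.sumComm (Fin B.card) (Fin B.card)) : Equiv.Perm (Fin B.card ⊕ Fin B.card))
    (Matrix.fromBlocks (0 : Matrix (Fin B.card) (Fin B.card) ℝ) P Q 0)
  rw [hswap, Matrix.det_fromBlocks_zero₂₁] at hperm
  have habs : |(Matrix.fromBlocks (0 : Matrix (Fin B.card) (Fin B.card) ℝ) P Q 0).det|
      = |Q.det| * |P.det| := by
    have := congrArg abs hperm
    rw [abs_mul, abs_mul, abs_unit_intCast, one_mul] at this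
    exact this.symm
  have hQP : Q = -Pᵀ := by
    ext b a
    simp only [hQ, hP, Matrix.of_apply, Matrix.neg_apply, Matrix.transpose_apply]
    exact robc_ee_oe _ _
  have habsQ : |Q.det| = |P.det| := by
    rw [hQP, Matrix.det_neg, Matrix.det_transpose, abs_mul, abs_pow, abs_neg, abs_one, one_pow,
      one_mul]
  have hPW : P = Matrix.of (fun a b => (-1:ℝ)^((A.orderEmbOfFin hAB a : Fin L) : ℕ) *
      (Matrix.of (fun a b => (-1:ℝ)^((B.orderEmbOfFin rfl b : Fin L) : ℕ) * W.transpose a b))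
        a b) := by
    ext a b
    simp only [hP, hW, Matrix.of_apply, Matrix.transpose_apply]
    rw [robc_oe_ee]
    ring
  have habsP : |P.det| = |W.det| := by
    rw [hPW, Matrix.det_mul_column, Matrix.det_mul_row, Matrix.det_transpose, abs_mul, abs_mul,
      Finset.abs_prod, Finset.abs_prod]
    have h1 : ∀ x : Fin L, |(-1:ℝ)^(x:ℕ)| = 1 := by
      intro x; rw [abs_pow, abs_neg, abs_one, one_pow]
    simp only [h1, Finset.prod_const_one, one_mul]
  rw [hdet1, habs, habsQ, habsP, sq]
lemma value_lemma {L : ℕ} (α : ℝ) (hα : 0 < α) (A B : Finset (Fin L)) :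
    |subdetR (Robc (2*L)) (pairSet L A B) (pairSet L A B)| ^ (α/2)
      = if A.card = B.card then |subdetR (Gobc L) B A| ^ α else 0 := by
  by_cases h : A.card = B.card
  · rw [if_pos h, abs_subdet_pair A B h,
      ← Real.rpow_natCast |subdetR (Gobc L) B A| 2, ← Real.rpow_mul (abs_nonneg _)]
    norm_num
    congr 1
    ring
  · rw [if_neg h, subdet_pair_ne A B h, abs_zero, Real.zero_rpow (half_pos hα).ne']

lemma cardS_eq {L : ℕ} (S : Finset (Fin (2*L))) : S.card = (preO S).card + (preE S).card := by
  calc S.card = (pairSet L (preO S) (preE S)).card := by rw [pairSet_pre]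
    _ = _ := card_pairSet _ _

end PfAux

theorem pf_det_correspondence_obc_general (L : ℕ) :
    ∀ α : ℝ, 0 < α → PfPowR (Robc (2 * L)) α = DetPowR (Gobc L) α := by
  intro α hα
  open PfAux in
  have hL1 : ∀ S : Finset (Fin (2*L)), |subdetR (Robc (2*L)) S S| ^ (α/2)
      = if (preO S).card = (preE S).card then |subdetR (Gobc L) (preE S) (preO S)| ^ α else 0 := by
    intro S
    conv_lhs => rw [← pairSet_pre S]
    exact value_lemma α hα (preO S) (preE S)
  have hstep1 : ∑ S ∈ Finset.univ.filter (fun S : Finset (Fin (2*L)) => Even S.card),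
      |subdetR (Robc (2*L)) S S| ^ (α/2)
      = ∑ S : Finset (Fin (2*L)), |subdetR (Robc (2*L)) S S| ^ (α/2) := by
    apply Finset.sum_filter_of_ne
    intro S _ hne
    by_contra hodd
    have hne2 : (preO S).card ≠ (preE S).card := by
      intro he
      exact hodd (by rw [cardS_eq S, he]; exact ⟨(preE S).card, rfl⟩)
    rw [hL1 S, if_neg hne2] at hne
    exact hne rfl
  have hstep2 : ∑ S : Finset (Fin (2*L)), |subdetR (Robc (2*L)) S S| ^ (α/2)
      = ∑ p : Finset (Fin L) × Finset (Fin L),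
          if p.1.card = p.2.card then |subdetR (Gobc L) p.2 p.1| ^ α else 0 := by
    apply Finset.sum_nbij' (i := fun S => (preO S, preE S))
      (j := fun p : Finset (Fin L) × Finset (Fin L) => pairSet L p.1 p.2)
    · intros; exact Finset.mem_univ _
    · intros; exact Finset.mem_univ _
    · intro S _; exact pairSet_pre S
    · intro p _; exact Prod.ext (preO_pairSet p.1 p.2) (preE_pairSet p.1 p.2)
    · intro S _; exact hL1 S
  have hstep3 : (∑ k ∈ Finset.range (L + 1),
        ∑ I ∈ Finset.univ.filter (fun I : Finset (Fin L) => I.card = k),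
          ∑ J ∈ Finset.univ.filter (fun J : Finset (Fin L) => J.card = k),
            |subdetR (Gobc L) I J| ^ α)
      = ∑ p : Finset (Fin L) × Finset (Fin L),
          if p.1.card = p.2.card then |subdetR (Gobc L) p.2 p.1| ^ α else 0 := by
    have e1 : ∀ k : ℕ, ∀ I ∈ Finset.univ.filter (fun I : Finset (Fin L) => I.card = k),
        (∑ J ∈ Finset.univ.filter (fun J : Finset (Fin L) => J.card = k),
          |subdetR (Gobc L) I J| ^ α)
        = ∑ J : Finset (Fin L), if J.card = I.card then |subdetR (Gobc L) I J| ^ α else 0 := by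
      intro k I hI
      rw [Finset.mem_filter] at hI
      rw [Finset.sum_filter]
      exact Finset.sum_congr rfl (fun J _ => by rw [hI.2])
    calc (∑ k ∈ Finset.range (L + 1),
        ∑ I ∈ Finset.univ.filter (fun I : Finset (Fin L) => I.card = k),
          ∑ J ∈ Finset.univ.filter (fun J : Finset (Fin L) => J.card = k),
            |subdetR (Gobc L) I J| ^ α)
        = ∑ k ∈ Finset.range (L + 1),
            ∑ I ∈ Finset.univ.filter (fun I : Finset (Fin L) => I.card = k),
              ∑ J : Finset (Fin L), if J.card = I.card then |subdetR (Gobc L) I J| ^ α else 0 :=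
          Finset.sum_congr rfl (fun k _ => Finset.sum_congr rfl (e1 k))
      _ = ∑ I : Finset (Fin L),
            ∑ J : Finset (Fin L), if J.card = I.card then |subdetR (Gobc L) I J| ^ α else 0 :=
          Finset.sum_fiberwise_of_maps_to (fun I _ => Finset.mem_range.mpr (by
            have := Finset.card_le_univ I
            simp only [Finset.card_univ, Fintype.card_fin] at this
            omega)) _
      _ = ∑ p : Finset (Fin L) × Finset (Fin L),
          if p.1.card = p.2.card then |subdetR (Gobc L) p.2 p.1| ^ α else 0 := by
          rw [Fintype.sum_prod_type, Finset.sum_comm]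
  rw [PfPowR, DetPowR, hstep1, hstep2, hstep3]


/-- **Stabilizer–Shannon correspondence, open-boundary case.**  For every even
`L ≥ 2` and every real `α > 0`,
`Pf_α(R^OBC(2L)) = Det_α(G^OBC(L))`. -/
theorem pf_det_correspondence_obc (L : ℕ) (hL : Even L) (hL2 : 2 ≤ L) :
    ∀ α : ℝ, 0 < α → PfPowR (Robc (2 * L)) α = DetPowR (Gobc L) α := by
  exact pf_det_correspondence_obc_general L
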